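/- With notation as in the single-slope setting (n = mk + l, 0 ≤ l < m, p_j = m − ⌈jm/n⌉), the reduction modulo t of P^{−1}·R(f)·P is a nilpotent matrix whose Jordan type is the m-balanced partition [(k+1)^l, k^{m−l}] of n. -/

import Mathlib

private def myF (n m i : ℕ) : ℕ := (i * m + n - 1) / n

private lemma F_le_iff {n : ℕ} (m : ℕ) (hn : 0 < n) (i v : ℕ) :
    myF n m i ≤ v ↔ i * m ≤ v * n := by
  unfold myF
  rw [Nat.div_le_iff_le_mul_add_pred hn, mul_comm n v]
  omega

private lemma F_self {n : ℕ} (m : ℕ) (hn : 0 < n) (i : ℕ) :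
    i * m ≤ myF n m i * n := (F_le_iff m hn i _).mp le_rfl

private lemma F_mono {n m : ℕ} (hn : 0 < n) {i j : ℕ} (h : i ≤ j) :
    myF n m i ≤ myF n m j := by
  rw [F_le_iff m hn]
  exact le_trans (Nat.mul_le_mul_right m h) (F_self m hn j)

private lemma F_le_m {n m : ℕ} (hn : 0 < n) {i : ℕ} (h : i ≤ n) :
    myF n m i ≤ m := by
  rw [F_le_iff m hn, mul_comm m n]
  exact Nat.mul_le_mul_right m h

private lemma le_n_of_F_le_m {n m : ℕ} (hn : 0 < n) (hm : 0 < m) {i : ℕ}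
    (h : myF n m i ≤ m) : i ≤ n := by
  rw [F_le_iff m hn, mul_comm m n] at h
  exact Nat.le_of_mul_le_mul_right h hm

private lemma F_n_eq {n m : ℕ} (hn : 0 < n) (hm : 0 < m) : myF n m n = m := by
  refine le_antisymm (F_le_m hn le_rfl) ?_
  by_contra hc
  push_neg at hc
  have h1 := (F_le_iff m hn n (m - 1)).mp (by omega)
  have e1 : (m - 1) * n + n = m * n := by
    have e : m - 1 + 1 = m := by omega
    calc (m - 1) * n + n = (m - 1 + 1) * n := by ring
      _ = m * n := by rw [e]
  have e2 : n * m = m * n := mul_comm n m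
  omega

private lemma last_col_lt {n m : ℕ} (hn : 0 < n) (hm : 0 < m) {i : ℕ} (hi : i < n) :
    m - myF n m (i + 1) < myF n m (n - i) := by
  have h1 := F_self m hn (i + 1)
  have h2 := F_self m hn (n - i)
  have hsum : m + 1 ≤ myF n m (i + 1) + myF n m (n - i) := by
    by_contra hc2
    push_neg at hc2
    have h3 : (myF n m (i + 1) + myF n m (n - i)) * n ≤ m * n :=
      Nat.mul_le_mul_right n (by omega)
    have e1 : (myF n m (i + 1) + myF n m (n - i)) * n
        = myF n m (i + 1) * n + myF n m (n - i) * n := add_mul _ _ _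
    have e2 : (i + 1 + (n - i)) * m = (i + 1) * m + (n - i) * m := add_mul _ _ _
    have e3 : i + 1 + (n - i) = n + 1 := by omega
    have e4 : (n + 1) * m = n * m + m := by ring
    have e5 : m * n = n * m := mul_comm m n
    rw [e3, e4] at e2
    omega
  have hFpos : 0 < myF n m (n - i) := by
    by_contra hc3
    push_neg at hc3
    have h6 := (F_le_iff m hn (n - i) 0).mp (by omega)
    have h7 : 0 < (n - i) * m := Nat.mul_pos (by omega) hm
    omega
  omega

private lemma tele (h : ℕ → ℕ) (hmono : Monotone h) (N : ℕ) :
    ∑ v ∈ Finset.Icc 1 N, (h v - h (v - 1)) = h N - h 0 := by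
  induction N with
  | zero => simp
  | succ N ih =>
    rw [Finset.sum_Icc_succ_top (by omega : 1 ≤ N + 1), ih]
    have h1 : h N ≤ h (N + 1) := hmono (by omega)
    have h2 : h 0 ≤ h N := hmono (by omega)
    simp only [Nat.add_sub_cancel]
    omega

private lemma count_aux (n m k l s : ℕ) (hn : 0 < n) (hm : 0 < m) (hl : l < m)
    (hnkl : n = m * k + l) :
    ((Finset.Icc 1 n).filter (fun i => myF n m i = myF n m (i + s))).card
      = l * (k + 1 - s) + (m - l) * (k - s) := by
  classical
  set G : ℕ → ℕ := fun v => v * n / m with hG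
  have keyFG : ∀ i v : ℕ, myF n m i ≤ v ↔ i ≤ G v := by
    intro i v
    rw [F_le_iff m hn, hG]
    exact (Nat.le_div_iff_mul_le hm).symm
  have Gmono : Monotone G := fun x y h => Nat.div_le_div_right (Nat.mul_le_mul_right n h)
  have hGm : G m = n := by
    show m * n / m = n
    exact Nat.mul_div_cancel_left n hm
  have hG0 : G 0 = 0 := by simp [hG]
  have hset : (Finset.Icc 1 n).filter (fun i => myF n m i = myF n m (i + s))
      = (Finset.Icc 1 m).biUnion (fun v => Finset.Ioc (G (v - 1)) (G v - s)) := by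
    ext i
    simp only [Finset.mem_filter, Finset.mem_Icc, Finset.mem_biUnion, Finset.mem_Ioc]
    constructor
    · rintro ⟨⟨h1, h2⟩, heq⟩
      have hipos : 1 ≤ myF n m i := by
        by_contra hc
        push_neg at hc
        have h6 := (keyFG i 0).mp (by omega)
        omega
      have hile : myF n m i ≤ m := F_le_m hn h2
      refine ⟨myF n m i, ⟨hipos, hile⟩, ?_, ?_⟩
      · by_contra hc
        push_neg at hc
        have h7 := (keyFG i (myF n m i - 1)).mpr hc
        omega
      · have h8 := (keyFG (i + s) (myF n m i)).mp (le_of_eq heq.symm)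
        omega
    · rintro ⟨v, ⟨hv1, hv2⟩, hgi, his⟩
      have hi1 : 1 ≤ i := by omega
      have hisv : i + s ≤ G v := by omega
      have hFi_le : myF n m i ≤ v := (keyFG i v).mpr (by omega)
      have hFis_le : myF n m (i + s) ≤ v := (keyFG (i + s) v).mpr hisv
      have hFi_gt : ¬ myF n m i ≤ v - 1 := by
        intro hc
        have := (keyFG i (v - 1)).mp hc
        omega
      have hFis_gt : ¬ myF n m (i + s) ≤ v - 1 := by
        intro hc
        have := (keyFG (i + s) (v - 1)).mp hc
        omega
      have hin : i ≤ n := by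
        have := Gmono hv2
        rw [hGm] at this
        omega
      exact ⟨⟨hi1, hin⟩, by omega⟩
  rw [hset, Finset.card_biUnion]
  swap
  · intro v hv w hw hvw
    simp only [Finset.coe_Icc, Set.mem_Icc, Function.onFun] at hv hw ⊢
    rw [Finset.disjoint_left]
    intro x hx hx'
    simp only [Finset.mem_Ioc] at hx hx'
    rcases lt_or_gt_of_ne hvw with h | h
    · have : G v ≤ G (w - 1) := Gmono (by omega)
      omega
    · have : G w ≤ G (v - 1) := Gmono (by omega)
      omega
  · have hterm : ∀ v ∈ Finset.Icc 1 m,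
        (Finset.Ioc (G (v - 1)) (G v - s)).card = G v - G (v - 1) - s := by
      intro v _
      rw [Nat.card_Ioc]
      have : G (v - 1) ≤ G v := Gmono (by omega)
      omega
    rw [Finset.sum_congr rfl hterm]
    set h : ℕ → ℕ := fun v => v * l / m with hh
    have hGv : ∀ v, G v = v * k + h v := by
      intro v
      show v * n / m = v * k + v * l / m
      rw [hnkl, show v * (m * k + l) = m * (v * k) + v * l by ring, Nat.mul_add_div hm]
    have hmono : Monotone h := fun x y hxy => Nat.div_le_div_right (Nat.mul_le_mul_right l hxy)
    have hstep : ∀ v, h (v + 1) ≤ h v + 1 := by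
      intro v
      show (v + 1) * l / m ≤ v * l / m + 1
      have e1 : (v + 1) * l = v * l + l := by ring
      calc (v + 1) * l / m ≤ (v * l + m) / m := Nat.div_le_div_right (by omega)
        _ = v * l / m + 1 := Nat.add_div_right _ hm
    have hdelta : ∀ v, 1 ≤ v → G v - G (v - 1) - s = (k + (h v - h (v - 1))) - s := by
      intro v hv
      obtain ⟨w, rfl⟩ : ∃ w, v = w + 1 := ⟨v - 1, by omega⟩
      rw [hGv, hGv]
      simp only [Nat.add_sub_cancel]
      have e1 : (w + 1) * k = w * k + k := by ring
      have e2 : h w ≤ h (w + 1) := hmono (by omega)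
      omega
    rw [Finset.sum_congr rfl (fun v hv => hdelta v (Finset.mem_Icc.mp hv).1)]
    rw [← Finset.sum_filter_add_sum_filter_not (Finset.Icc 1 m) (fun v => h (v - 1) < h v)]
    have hcardC : ((Finset.Icc 1 m).filter (fun v => h (v - 1) < h v)).card = l := by
      rw [Finset.card_filter]
      have hcong : ∀ v ∈ Finset.Icc 1 m,
          (if h (v - 1) < h v then 1 else 0) = h v - h (v - 1) := by
        intro v hv
        simp only [Finset.mem_Icc] at hv
        obtain ⟨w, rfl⟩ : ∃ w, v = w + 1 := ⟨v - 1, by omega⟩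
        have e2 := hstep w
        have e3 : h w ≤ h (w + 1) := hmono (by omega)
        simp only [Nat.add_sub_cancel]
        split_ifs with hc <;> omega
      rw [Finset.sum_congr rfl hcong, tele h hmono m]
      have h1 : h m = l := Nat.mul_div_cancel_left l hm
      have h0 : h 0 = 0 := by simp [hh]
      omega
    have s1 : ∀ v ∈ (Finset.Icc 1 m).filter (fun v => h (v - 1) < h v),
        (k + (h v - h (v - 1))) - s = (k + 1) - s := by
      intro v hv
      simp only [Finset.mem_filter, Finset.mem_Icc] at hv
      obtain ⟨⟨hv1, hv2⟩, hvc⟩ := hv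
      obtain ⟨w, rfl⟩ : ∃ w, v = w + 1 := ⟨v - 1, by omega⟩
      have e2 := hstep w
      simp only [Nat.add_sub_cancel] at hvc ⊢
      omega
    have s0 : ∀ v ∈ (Finset.Icc 1 m).filter (fun v => ¬ h (v - 1) < h v),
        (k + (h v - h (v - 1))) - s = k - s := by
      intro v hv
      simp only [Finset.mem_filter, Finset.mem_Icc] at hv
      obtain ⟨⟨hv1, hv2⟩, hvc⟩ := hv
      have e2 : h (v - 1) ≤ h v := hmono (by omega)
      omega
    rw [Finset.sum_congr rfl s1, Finset.sum_congr rfl s0, Finset.sum_const, Finset.sum_const,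
      smul_eq_mul, smul_eq_mul, hcardC]
    have hcard' : ((Finset.Icc 1 m).filter (fun v => ¬ h (v - 1) < h v)).card = m - l := by
      have hh2 := Finset.card_filter_add_card_filter_not
        (s := Finset.Icc 1 m) (p := fun v => h (v - 1) < h v)
      rw [hcardC] at hh2
      simp only [Nat.card_Icc] at hh2
      omega
    rw [hcard']

open Matrix in
private lemma rank_aux {n : ℕ} (N : Matrix (Fin n) (Fin n) ℂ) (c : Fin n → Prop)
    [DecidablePred c] (σ : Fin n → Fin n)
    (hσ : ∀ i j, c i → c j → σ i = σ j → i = j)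
    (hN : ∀ i j, N i j = if c j ∧ i = σ j then 1 else 0) :
    N.rank = (Finset.univ.filter c).card := by
  classical
  have hcol : ∀ j, Nᵀ j = if c j then Pi.single (σ j) (1 : ℂ) else 0 := by
    intro j
    funext i
    rw [Matrix.transpose_apply, hN]
    by_cases hc : c j
    · simp only [hc, true_and, if_true]
      rw [Pi.single_apply]
    · simp [hc]
  set T : Finset (Fin n) := Finset.univ.filter c with hT
  set S : Finset (Fin n) := T.image σ with hS
  have hcardS : S.card = T.card := by
    rw [hS]
    apply Finset.card_image_of_injOn
    intro x hx y hy hxy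
    simp only [hT, Finset.coe_filter, Set.mem_setOf_eq] at hx hy
    exact hσ x y hx.2 hy.2 hxy
  set W : Finset (Fin n → ℂ) := S.image (fun i => Pi.single i (1 : ℂ)) with hW
  have hsingle_inj : Function.Injective (fun i : Fin n => Pi.single i (1 : ℂ)) := by
    intro i j hij
    by_contra hne
    have := congrFun hij i
    simp [Pi.single_apply, if_neg hne] at this
  have hcardW : W.card = T.card := by
    rw [hW, Finset.card_image_of_injective _ hsingle_inj, hcardS]
  have hspan : Submodule.span ℂ (Set.range Nᵀ) = Submodule.span ℂ (W : Set (Fin n → ℂ)) := by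
    apply le_antisymm
    · rw [Submodule.span_le]
      rintro x ⟨j, rfl⟩
      rw [hcol]
      by_cases hc : c j
      · rw [if_pos hc]
        apply Submodule.subset_span
        simp only [hW, hS, Finset.coe_image, Set.mem_image]
        exact ⟨σ j, by simp [hT, Finset.mem_image]; exact ⟨j, hc, rfl⟩, rfl⟩
      · rw [if_neg hc]
        exact Submodule.zero_mem _
    · rw [Submodule.span_le]
      intro x hx
      simp only [hW, hS, Finset.coe_image, Set.mem_image] at hx
      obtain ⟨i, hi, rfl⟩ := hx
      obtain ⟨j, hj, rfl⟩ := hi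
      simp only [hT, Finset.coe_filter, Set.mem_setOf_eq] at hj
      apply Submodule.subset_span
      exact ⟨j, by rw [hcol, if_pos hj.2]⟩
  have hli : LinearIndependent ℂ
      (fun i : (S : Set (Fin n)) => (Pi.single (i : Fin n) (1 : ℂ) : Fin n → ℂ)) := by
    have h1 := (Pi.basisFun ℂ (Fin n)).linearIndependent
    have h2 := h1.comp (Subtype.val : {x // x ∈ (S : Set (Fin n))} → Fin n) Subtype.val_injective
    simpa [Function.comp_def] using h2
  have hWrange : (W : Set (Fin n → ℂ))
      = Set.range (fun i : (S : Set (Fin n)) => (Pi.single (i : Fin n) (1 : ℂ) : Fin n → ℂ)) := by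
    rw [hW, Finset.coe_image]
    exact Set.image_eq_range _ _
  have hliW : LinearIndependent ℂ
      (Subtype.val : {x // x ∈ (W : Set (Fin n → ℂ))} → (Fin n → ℂ)) := by
    rw [hWrange]
    exact hli.linearIndepOn_id
  rw [Matrix.rank_eq_finrank_span_cols, Matrix.col_def, hspan, finrank_span_finset_eq_card hliW, hcardW]

theorem stmt_12 (n m k l : ℕ) (hn : 0 < n) (hm : 0 < m) (hl : l < m)
    (hnkl : n = m * k + l)
    (a : Fin n → PowerSeries ℂ)
    (han : (PowerSeries.X : PowerSeries ℂ) ^ m ∣ a ⟨n - 1, by omega⟩ ∧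
      ¬ (PowerSeries.X : PowerSeries ℂ) ^ (m + 1) ∣ a ⟨n - 1, by omega⟩)
    (hord : ∀ i : Fin n,
      (PowerSeries.X : PowerSeries ℂ) ^ ((((i : ℕ) + 1) * m + n - 1) / n) ∣ a i)
    (R : Matrix (Fin n) (Fin n) (PowerSeries ℂ))
    (hR : ∀ i j : Fin n, R i j =
      if (i : ℕ) = (j : ℕ) + 1 then 1
      else if (j : ℕ) = n - 1 then
        - a ⟨n - 1 - (i : ℕ), by omega⟩
      else 0)
    (p : Fin n → ℕ)
    (hp : ∀ j : Fin n, p j = m - (((j : ℕ) + 1) * m + n - 1) / n)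
    (M : Matrix (Fin n) (Fin n) ℂ)
    (hM : ∀ i j : Fin n, M i j =
      if p j ≤ p i then PowerSeries.coeff (p i - p j) (R i j) else 0) :
    ∀ s : ℕ, (M ^ s).rank = l * (k + 1 - s) + (m - l) * (k - s) := by
  classical
  have unf : ∀ x : ℕ, (x * m + n - 1) / n = myF n m x := fun _ => rfl
  -- explicit form of M
  have hM' : ∀ i j : Fin n, M i j =
      if ((i : ℕ) = (j : ℕ) + 1 ∧ myF n m ((j : ℕ) + 1) = myF n m ((j : ℕ) + 2)) then 1
      else 0 := by
    intro i j
    rw [hM i j, hR i j, hp i, hp j]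
    simp only [unf]
    by_cases hij : (i : ℕ) = (j : ℕ) + 1
    · rw [if_pos hij, hij]
      have hj2 : (j : ℕ) + 2 ≤ n := by
        have := i.isLt
        omega
      have e12 : (j : ℕ) + 1 + 1 = (j : ℕ) + 2 := by omega
      rw [e12]
      have h1 : myF n m ((j : ℕ) + 1) ≤ myF n m ((j : ℕ) + 2) := F_mono hn (by omega)
      have h2 : myF n m ((j : ℕ) + 2) ≤ m := F_le_m hn hj2
      by_cases heq : myF n m ((j : ℕ) + 1) = myF n m ((j : ℕ) + 2)
      · rw [if_pos (by omega), if_pos ⟨rfl, heq⟩,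
          show m - myF n m ((j : ℕ) + 2) - (m - myF n m ((j : ℕ) + 1)) = 0 by omega]
        simp
      · rw [if_neg (by omega), if_neg (fun h => heq h.2)]
    · rw [if_neg hij]
      by_cases hjn : (j : ℕ) = n - 1
      · rw [if_pos hjn, hjn]
        have hj1 : n - 1 + 1 = n := by omega
        rw [hj1, F_n_eq hn hm, Nat.sub_self]
        rw [if_pos (Nat.zero_le _), Nat.sub_zero]
        have hdvd := hord ⟨n - 1 - (i : ℕ), by omega⟩
        simp only [unf] at hdvd
        have e : n - 1 - (i : ℕ) + 1 = n - (i : ℕ) := by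
          have := i.isLt
          omega
        rw [e] at hdvd
        have hlt : m - myF n m ((i : ℕ) + 1) < myF n m (n - (i : ℕ)) :=
          last_col_lt hn hm i.isLt
        rw [map_neg, PowerSeries.X_pow_dvd_iff.mp hdvd _ hlt, neg_zero]
        rw [if_neg]
        rintro ⟨h1, -⟩
        have := i.isLt
        omega
      · rw [if_neg hjn]
        simp [hij]
  -- power formula
  have hMs : ∀ (s : ℕ) (i j : Fin n), (M ^ s) i j =
      if ((i : ℕ) = (j : ℕ) + s ∧ myF n m ((j : ℕ) + 1) = myF n m ((j : ℕ) + 1 + s)) then 1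
      else 0 := by
    intro s
    induction s with
    | zero =>
      intro i j
      rw [pow_zero, Matrix.one_apply]
      have hiff : ((i : ℕ) = (j : ℕ) + 0
          ∧ myF n m ((j : ℕ) + 1) = myF n m ((j : ℕ) + 1 + 0)) ↔ i = j := by
        rw [Nat.add_zero, Nat.add_zero]
        constructor
        · rintro ⟨h1, -⟩
          exact Fin.ext h1
        · rintro rfl
          exact ⟨rfl, rfl⟩
      rw [if_congr hiff rfl rfl]
    | succ s ih =>
      intro i j
      rw [pow_succ, Matrix.mul_apply]
      by_cases hjs : (j : ℕ) + 1 < n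
      · rw [Finset.sum_eq_single (⟨(j : ℕ) + 1, hjs⟩ : Fin n)]
        · rw [ih, hM']
          have e1 : ((⟨(j : ℕ) + 1, hjs⟩ : Fin n) : ℕ) = (j : ℕ) + 1 := rfl
          simp only [e1]
          have hmono1 : myF n m ((j : ℕ) + 1) ≤ myF n m ((j : ℕ) + 1 + 1) := F_mono hn (by omega)
          have hmono2 : myF n m ((j : ℕ) + 1 + 1) ≤ myF n m ((j : ℕ) + 1 + 1 + s) :=
            F_mono hn (by omega)
          have e2 : (j : ℕ) + 1 + (s + 1) = (j : ℕ) + 1 + 1 + s := by omega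
          have e3 : (j : ℕ) + (s + 1) = (j : ℕ) + 1 + s := by omega
          have e4 : (j : ℕ) + 2 = (j : ℕ) + 1 + 1 := by omega
          rw [e2, e3, e4]
          by_cases hc : ((i : ℕ) = (j : ℕ) + 1 + s
              ∧ myF n m ((j : ℕ) + 1) = myF n m ((j : ℕ) + 1 + 1 + s))
          · have hXY : myF n m ((j : ℕ) + 1) = myF n m ((j : ℕ) + 1 + 1) := by
              have := hc.2
              omega
            have hYZ : myF n m ((j : ℕ) + 1 + 1) = myF n m ((j : ℕ) + 1 + 1 + s) := by
              have := hc.2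
              omega
            rw [if_pos ⟨hc.1, hYZ⟩, if_pos (by exact ⟨trivial, hXY⟩), if_pos hc, mul_one]
          · rw [if_neg hc]
            by_cases hl1 : ((i : ℕ) = (j : ℕ) + 1 + s
                ∧ myF n m ((j : ℕ) + 1 + 1) = myF n m ((j : ℕ) + 1 + 1 + s))
            · rw [if_pos hl1]
              by_cases hl2 : myF n m ((j : ℕ) + 1) = myF n m ((j : ℕ) + 1 + 1)
              · exact absurd ⟨hl1.1, hl2.trans hl1.2⟩ hc
              · rw [if_neg (by exact fun h => hl2 h.2), mul_zero]
            · rw [if_neg hl1, zero_mul]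
        · intro b _ hb
          rw [hM', if_neg, mul_zero]
          rintro ⟨h1, -⟩
          exact hb (Fin.ext h1)
        · intro h
          exact absurd (Finset.mem_univ _) h
      · have hz : ∀ b : Fin n, M b j = 0 := by
          intro b
          rw [hM', if_neg]
          rintro ⟨h1, -⟩
          have := b.isLt
          omega
        simp only [hz, mul_zero, Finset.sum_const_zero]
        rw [if_neg]
        rintro ⟨h1, -⟩
        have := i.isLt
        omega
  intro s
  -- rank via rank_aux
  set c : Fin n → Prop := fun j => myF n m ((j : ℕ) + 1) = myF n m ((j : ℕ) + 1 + s) with hc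
  have hcs : ∀ j : Fin n, c j → (j : ℕ) + s < n := by
    intro j hcj
    have h1 : myF n m ((j : ℕ) + 1) ≤ m := F_le_m hn (by have := j.isLt; omega)
    have h2 : (j : ℕ) + 1 + s ≤ n := le_n_of_F_le_m hn hm (by rw [← hcj]; exact h1)
    rcases Nat.eq_zero_or_pos s with hs | hs
    · have := j.isLt
      omega
    · omega
  set σ : Fin n → Fin n := fun j =>
    if h : (j : ℕ) + s < n then (⟨(j : ℕ) + s, h⟩ : Fin n) else j with hσdef
  have hσ : ∀ i j, c i → c j → σ i = σ j → i = j := by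
    intro x y hx hy hxy
    have hx' := hcs x hx
    have hy' := hcs y hy
    rw [hσdef] at hxy
    simp only [dif_pos hx', dif_pos hy'] at hxy
    have := congrArg Fin.val hxy
    simp only [Fin.val_mk] at this
    exact Fin.ext (by omega)
  have hN : ∀ i j, (M ^ s) i j = if c j ∧ i = σ j then 1 else 0 := by
    intro i j
    rw [hMs s i j]
    by_cases hcj : c j
    · have hlt := hcs j hcj
      have hσj : σ j = (⟨(j : ℕ) + s, hlt⟩ : Fin n) := by
        rw [hσdef]
        simp only [dif_pos hlt]
      by_cases hi : (i : ℕ) = (j : ℕ) + s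
      · rw [if_pos ⟨hi, hcj⟩, if_pos ⟨hcj, by rw [hσj]; exact Fin.ext hi⟩]
      · rw [if_neg (fun h => hi h.1), if_neg]
        rintro ⟨-, h2⟩
        exact hi (by rw [h2, hσj])
    · rw [if_neg (fun h => hcj h.2), if_neg (fun h => hcj h.1)]
  rw [rank_aux (M ^ s) c σ hσ hN]
  have hcard : (Finset.univ.filter c).card
      = ((Finset.Icc 1 n).filter (fun i => myF n m i = myF n m (i + s))).card := by
    refine Finset.card_bij (fun j _ => (j : ℕ) + 1) ?_ ?_ ?_
    · intro j hj
      simp only [Finset.mem_filter, Finset.mem_univ, true_and] at hj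
      simp only [Finset.mem_filter, Finset.mem_Icc]
      have := j.isLt
      exact ⟨⟨by omega, by omega⟩, hj⟩
    · intro x hx y hy hxy
      exact Fin.ext (by omega)
    · intro i hi
      simp only [Finset.mem_filter, Finset.mem_Icc] at hi
      obtain ⟨⟨h1, h2⟩, hceq⟩ := hi
      refine ⟨⟨i - 1, by omega⟩, ?_, by simp; omega⟩
      simp only [Finset.mem_filter, Finset.mem_univ, true_and, hc, Fin.val_mk]
      rw [show i - 1 + 1 = i by omega]
      exact hceq
  rw [hcard, count_aux n m k l s hn hm hl hnkl]
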